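/- Let (X_t) be a continuous-time Markov chain on ℤ^d whose heat kernel with respect to a speed measure ν (with ν ≥ c > 0) satisfies the lower Gaussian bound q_t(x,y) ≥ (c/t^{d/2})·exp(−c'|x−y|²/t) for t ≥ 1 ∨ c̃|x−y|. Fix x₀ and radii so that A = B(x₀, K). Then there is a constant c̄ > 0 such that for all x ∈ A and the annulus 𝒜 = B(x₀,40K)∖B(x₀,20K): P_x[X_{K²} ∈ 𝒜] ≥ c̄. Consequently, by iterating the Markov property at times jK², j = 1,…,⌊T/K²⌋, one gets P_x[T_A > T] ≤ (1−c̄)^{⌊T/K²⌋} for the exit time T_A of A; in particular for T = K^{2α'} with α' > 1, P_x[T_A > K^{2α'}] ≤ exp(−c K^{2(α'−1)}). -/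

import Mathlib

open MeasureTheory ProbabilityTheory

/-- Euclidean distance on `ℤ^d`. -/
noncomputable def eudist (d : ℕ) (x y : Fin d → ℤ) : ℝ :=
  Real.sqrt (∑ i, ((x i : ℝ) - (y i : ℝ)) ^ 2)

noncomputable def emb (d : ℕ) (x : Fin d → ℤ) : EuclideanSpace ℝ (Fin d) :=
  WithLp.toLp 2 (fun i => (x i : ℝ))

lemma eudist_eq_dist (d : ℕ) (x y : Fin d → ℤ) :
    eudist d x y = dist (emb d x) (emb d y) := by
  rw [EuclideanSpace.dist_eq]
  unfold eudist emb
  simp only [WithLp.ofLp_toLp]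
  congr 1
  refine Finset.sum_congr rfl fun i _ => ?_
  rw [Real.dist_eq, sq_abs]

lemma eudist_nonneg (d : ℕ) (x y : Fin d → ℤ) : 0 ≤ eudist d x y :=
  Real.sqrt_nonneg _

lemma eudist_comm (d : ℕ) (x y : Fin d → ℤ) : eudist d x y = eudist d y x := by
  rw [eudist_eq_dist, eudist_eq_dist, dist_comm]

lemma eudist_triangle (d : ℕ) (x y z : Fin d → ℤ) :
    eudist d x z ≤ eudist d x y + eudist d y z := by
  rw [eudist_eq_dist, eudist_eq_dist, eudist_eq_dist]
  exact dist_triangle _ _ _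

lemma eudist_add (d : ℕ) (x₀ v : Fin d → ℤ) :
    eudist d x₀ (fun i => x₀ i + v i) = Real.sqrt (∑ i, ((v i : ℝ)) ^ 2) := by
  unfold eudist
  congr 1
  refine Finset.sum_congr rfl fun i _ => ?_
  push_cast
  ring

lemma annulus_lower
    (d : ℕ) (hd : 3 ≤ d)
    (c c' ctilde cν : ℝ) (hc : 0 < c) (hc' : 0 < c') (hct : 0 < ctilde)
    (hcν : 0 < cν) (K : ℕ) (hK1 : 1 ≤ K) (hKct : 41 * ctilde ≤ (K : ℝ))
    (x₀ : Fin d → ℤ) (κ : Kernel (Fin d → ℤ) (Fin d → ℤ))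
    (ν : (Fin d → ℤ) → ℝ) (hν : ∀ y, cν ≤ ν y)
    (hheat : ∀ x y : Fin d → ℤ, ctilde * eudist d x y ≤ (K : ℝ) ^ 2 →
      ENNReal.ofReal (c / ((K : ℝ) ^ 2) ^ ((d : ℝ) / 2) *
        Real.exp (-c' * eudist d x y ^ 2 / (K : ℝ) ^ 2) * ν y) ≤ κ x {y})
    (x : Fin d → ℤ) (hx : eudist d x₀ x ≤ K) :
    ENNReal.ofReal (c * Real.exp (-(1681 * c')) * cν / (d : ℝ) ^ (d - 1)) ≤
      κ x {y | 20 * (K : ℝ) ≤ eudist d x₀ y ∧ eudist d x₀ y ≤ 40 * K} := by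
  have hdpos : 0 < d := by omega
  set S : Set (Fin d → ℤ) := {y | 20 * (K : ℝ) ≤ eudist d x₀ y ∧ eudist d x₀ y ≤ 40 * K}
    with hS
  have hdR : (0 : ℝ) < d := by exact_mod_cast hdpos
  have hdR1 : (1 : ℝ) ≤ d := by exact_mod_cast hdpos
  have hKR : (0 : ℝ) < K := by exact_mod_cast hK1
  set i0 : Fin d := ⟨0, by omega⟩ with hi0
  set lo : Fin d → ℤ := fun i => if i = i0 then 20 * K else 0 with hlo
  set hi : Fin d → ℤ := fun i => if i = i0 then 21 * K else ((K / d : ℕ) : ℤ) with hhi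
  set B : Finset (Fin d → ℤ) := Fintype.piFinset (fun i => Finset.Icc (lo i) (hi i)) with hB
  set F : Finset (Fin d → ℤ) := B.image (fun v i => x₀ i + v i) with hF
  have hmemB : ∀ v ∈ B, (20 * (K : ℤ) ≤ v i0 ∧ v i0 ≤ 21 * K) ∧
      ∀ i, i ≠ i0 → 0 ≤ v i ∧ v i ≤ ((K / d : ℕ) : ℤ) := by
    intro v hv
    rw [hB, Fintype.mem_piFinset] at hv
    constructor
    · have := hv i0; rw [Finset.mem_Icc] at this; simpa [hlo, hhi] using this
    · intro i hi'; have := hv i; rw [Finset.mem_Icc] at this; simpa [hlo, hhi, hi'] using this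
  have hKd1 : ((K / d : ℕ) : ℝ) ≤ (K : ℝ) / d := Nat.cast_div_le
  have hF_ann : ∀ y ∈ F, 20 * (K : ℝ) ≤ eudist d x₀ y ∧ eudist d x₀ y ≤ 40 * K := by
    intro y hy
    rw [hF, Finset.mem_image] at hy
    obtain ⟨v, hv, rfl⟩ := hy
    obtain ⟨⟨h1, h2⟩, h3⟩ := hmemB v hv
    rw [eudist_add]
    have h1' : (20 * (K : ℝ)) ≤ (v i0 : ℝ) := by exact_mod_cast h1
    have h20 : (0 : ℝ) ≤ 20 * K := by positivity
    have hsum_lb : (20 * (K : ℝ)) ^ 2 ≤ ∑ i, ((v i : ℝ)) ^ 2 := by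
      calc (20 * (K : ℝ)) ^ 2 ≤ ((v i0 : ℝ)) ^ 2 := pow_le_pow_left₀ h20 h1' 2
        _ ≤ ∑ i, ((v i : ℝ)) ^ 2 :=
            Finset.single_le_sum (f := fun i => ((v i : ℝ)) ^ 2)
              (fun i _ => sq_nonneg _) (Finset.mem_univ i0)
    have hsum_ub : ∑ i, ((v i : ℝ)) ^ 2 ≤ (40 * (K : ℝ)) ^ 2 := by
      have hsplit : ∑ i, ((v i : ℝ)) ^ 2
          = ((v i0 : ℝ)) ^ 2 + ∑ i ∈ Finset.univ.erase i0, ((v i : ℝ)) ^ 2 :=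
        (Finset.add_sum_erase _ _ (Finset.mem_univ i0)).symm
      have hterm : ∀ i ∈ Finset.univ.erase i0, ((v i : ℝ)) ^ 2 ≤ ((K : ℝ) / d) ^ 2 := by
        intro i hi'
        have hne := (Finset.mem_erase.mp hi').1
        obtain ⟨ha, hb⟩ := h3 i hne
        have h0 : (0 : ℝ) ≤ (v i : ℝ) := by exact_mod_cast ha
        have hb' : ((v i : ℝ)) ≤ ((K / d : ℕ) : ℝ) := by
          have h : ((v i : ℝ)) ≤ (((K / d : ℕ) : ℤ) : ℝ) := Int.cast_mono hb
          push_cast at h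
          exact h
        exact pow_le_pow_left₀ h0 (hb'.trans hKd1) 2
      have e2 : ∑ i ∈ Finset.univ.erase i0, ((v i : ℝ)) ^ 2
          ≤ (Finset.univ.erase i0).card • (((K : ℝ) / d) ^ 2) :=
        Finset.sum_le_card_nsmul _ _ _ hterm
      have hcard : ((Finset.univ.erase i0).card : ℝ) ≤ (d : ℝ) := by
        rw [Finset.card_erase_of_mem (Finset.mem_univ _), Finset.card_univ, Fintype.card_fin]
        exact_mod_cast Nat.sub_le d 1
      have e2' : ∑ i ∈ Finset.univ.erase i0, ((v i : ℝ)) ^ 2 ≤ (d : ℝ) * ((K : ℝ) / d) ^ 2 := by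
        rw [nsmul_eq_mul] at e2
        refine e2.trans (mul_le_mul_of_nonneg_right hcard (by positivity))
      have e3 : (d : ℝ) * ((K : ℝ) / d) ^ 2 ≤ (K : ℝ) ^ 2 := by
        rw [div_pow]
        rw [show (d : ℝ) * ((K : ℝ) ^ 2 / (d : ℝ) ^ 2) = (K : ℝ) ^ 2 / d by field_simp]
        exact div_le_self (sq_nonneg _) hdR1
      have h2' : ((v i0 : ℝ)) ≤ 21 * K := by exact_mod_cast h2
      have h0' : (0 : ℝ) ≤ (v i0 : ℝ) := le_trans h20 h1'
      have e1 : ((v i0 : ℝ)) ^ 2 ≤ (21 * (K : ℝ)) ^ 2 := pow_le_pow_left₀ h0' h2' 2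
      rw [hsplit]
      nlinarith [sq_nonneg (K : ℝ)]
    constructor
    · rw [show (20 * (K : ℝ)) = Real.sqrt ((20 * (K : ℝ)) ^ 2) from (Real.sqrt_sq h20).symm]
      exact Real.sqrt_le_sqrt hsum_lb
    · exact (Real.sqrt_le_sqrt hsum_ub).trans_eq (Real.sqrt_sq (by positivity))
  set p := c / (K : ℝ) ^ d * Real.exp (-(1681 * c')) * cν with hp
  have hppos : 0 < p := by rw [hp]; positivity
  have hrpow : (((K : ℝ) ^ 2) : ℝ) ^ ((d : ℝ) / 2) = (K : ℝ) ^ d := by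
    rw [← Real.rpow_natCast (K : ℝ) 2, ← Real.rpow_mul hKR.le,
      show ((2 : ℕ) : ℝ) * ((d : ℝ) / 2) = ((d : ℕ) : ℝ) by push_cast; ring,
      Real.rpow_natCast]
  have hsingle : ∀ y ∈ F, ENNReal.ofReal p ≤ κ x {y} := by
    intro y hy
    obtain ⟨h20, h40⟩ := hF_ann y hy
    have hdy : eudist d x y ≤ 41 * K := by
      have h := eudist_triangle d x x₀ y
      rw [eudist_comm d x x₀] at h
      linarith
    have hcond : ctilde * eudist d x y ≤ (K : ℝ) ^ 2 := by
      calc ctilde * eudist d x y ≤ ctilde * (41 * K) :=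
            mul_le_mul_of_nonneg_left hdy hct.le
        _ = (41 * ctilde) * K := by ring
        _ ≤ (K : ℝ) * K := mul_le_mul_of_nonneg_right hKct hKR.le
        _ = (K : ℝ) ^ 2 := (sq (K : ℝ)).symm
    refine le_trans ?_ (hheat x y hcond)
    apply ENNReal.ofReal_le_ofReal
    rw [hrpow, hp]
    have hexp : Real.exp (-(1681 * c')) ≤ Real.exp (-c' * eudist d x y ^ 2 / (K : ℝ) ^ 2) := by
      apply Real.exp_le_exp.mpr
      have heu2 : eudist d x y ^ 2 ≤ 1681 * (K : ℝ) ^ 2 := by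
        nlinarith [eudist_nonneg d x y]
      have hrw : -c' * eudist d x y ^ 2 / (K : ℝ) ^ 2
          = -(c' * eudist d x y ^ 2 / (K : ℝ) ^ 2) := by ring
      rw [hrw, neg_le_neg_iff, div_le_iff₀ (by positivity)]
      nlinarith
    gcongr
    repeat' first
      | exact hexp
      | exact hν y
  
  have hinj : Function.Injective (fun (v : Fin d → ℤ) (i : Fin d) => x₀ i + v i) := by
    intro v w h
    funext i
    simpa using congrFun h i
  have hcardF : F.card = B.card := Finset.card_image_of_injective _ hinj
  have hcard_ge : (K : ℝ) ^ d / (d : ℝ) ^ (d - 1) ≤ (B.card : ℝ) := by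
    rw [hB, Fintype.card_piFinset]
    push_cast
    calc (K : ℝ) ^ d / (d : ℝ) ^ (d - 1)
        = ∏ i, (if i = i0 then (K : ℝ) else (K : ℝ) / d) := by
          rw [← Finset.mul_prod_erase Finset.univ _ (Finset.mem_univ i0), if_pos rfl,
            Finset.prod_congr rfl (fun i hi' => if_neg ((Finset.mem_erase.mp hi').1)),
            Finset.prod_const, Finset.card_erase_of_mem (Finset.mem_univ _),
            Finset.card_univ, Fintype.card_fin, div_pow]
          rw [show (K : ℝ) ^ d = (K : ℝ) * (K : ℝ) ^ (d - 1) by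
            conv_lhs => rw [show d = (d - 1) + 1 by omega]
            rw [pow_succ]; ring]
          field_simp
      _ ≤ ∏ i, (((Finset.Icc (lo i) (hi i)).card : ℝ)) := by
          apply Finset.prod_le_prod
          · intro i _; split <;> positivity
          · intro i _
            by_cases h : i = i0
            · subst h
              rw [if_pos rfl, show lo i0 = 20 * (K : ℤ) from if_pos rfl,
                show hi i0 = 21 * (K : ℤ) from if_pos rfl, Int.card_Icc,
                show (21 * (K : ℤ) + 1 - 20 * K) = ((K + 1 : ℕ) : ℤ) by push_cast; ring,
                Int.toNat_natCast]
              push_cast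
              linarith
            · rw [if_neg h, show lo i = 0 from if_neg h,
                show hi i = ((K / d : ℕ) : ℤ) from if_neg h, Int.card_Icc,
                show (((K / d : ℕ) : ℤ) + 1 - 0) = ((K / d + 1 : ℕ) : ℤ) by push_cast; ring,
                Int.toNat_natCast]
              rw [div_le_iff₀ hdR]
              have h2 : K % d < d := Nat.mod_lt K hdpos
              have h3 : K < (K / d + 1) * d := by
                calc K = d * (K / d) + K % d := (Nat.div_add_mod K d).symm
                  _ < d * (K / d) + d := by omega
                  _ = (K / d + 1) * d := by ring
              exact_mod_cast h3.le
  have hsum_eq : ∑ y ∈ F, κ x {y} = κ x (⋃ y ∈ F, {y}) := by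
    refine (measure_biUnion_finset ?_ ?_).symm
    · intro a _ b _ hab
      simp only [Function.onFun, Set.disjoint_singleton]
      exact hab
    · intro b _; exact measurableSet_singleton b
  have hsub : (⋃ y ∈ F, ({y} : Set (Fin d → ℤ)))
      ⊆ S := by
    intro z hz
    simp only [Set.mem_iUnion, Set.mem_singleton_iff] at hz
    obtain ⟨y, hy, hzy⟩ := hz
    cases hzy
    exact hF_ann _ hy
  calc ENNReal.ofReal (c * Real.exp (-(1681 * c')) * cν / (d : ℝ) ^ (d - 1))
      ≤ ENNReal.ofReal ((B.card : ℝ) * p) := by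
        apply ENNReal.ofReal_le_ofReal
        rw [show c * Real.exp (-(1681 * c')) * cν / (d : ℝ) ^ (d - 1)
            = ((K : ℝ) ^ d / (d : ℝ) ^ (d - 1)) * p by rw [hp]; field_simp]
        exact mul_le_mul_of_nonneg_right hcard_ge hppos.le
    _ = (B.card : ENNReal) * ENNReal.ofReal p := by
        rw [ENNReal.ofReal_mul (Nat.cast_nonneg _), ENNReal.ofReal_natCast]
    _ = ∑ _y ∈ F, ENNReal.ofReal p := by
        rw [Finset.sum_const, hcardF, nsmul_eq_mul]
    _ ≤ ∑ y ∈ F, κ x {y} := Finset.sum_le_sum hsingle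
    _ = κ x (⋃ y ∈ F, {y}) := hsum_eq
    _ ≤ κ x S := measure_mono hsub

/-- Probability that the discrete skeleton (with transition kernel `κ`) stays
in the set `A` for `n` consecutive steps. -/
noncomputable def stayProb {d : ℕ} (κ : Kernel (Fin d → ℤ) (Fin d → ℤ))
    (A : Set (Fin d → ℤ)) : ℕ → (Fin d → ℤ) → ENNReal
  | 0, _ => 1
  | n + 1, x => ∫⁻ y in A, stayProb κ A n y ∂(κ x)

/-- exit-time deviation estimate: for a Markov chain on `ℤ^d`
whose one-step (time `K²`) kernel admits a lower Gaussian heat kernel bound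
with speed measure `ν ≥ cν > 0`, there is `c̄ ∈ (0,1)` such that, for `K`
large: (i) from any `x ∈ A = B(x₀,K)` the chain lands in the annulus
`B(x₀,40K)∖B(x₀,20K)` with probability at least `c̄`; (ii) the probability of
staying in `A` for `n` steps is at most `(1−c̄)^n`; (iii) with
`n = ⌊K^{2α'}/K²⌋` steps (`α' > 1`) this is at most `exp(−c̄·n)`. -/
theorem exit_time_deviation
    (d : ℕ) (hd : 3 ≤ d)
    (c c' ctilde cν : ℝ) (hc : 0 < c) (hc' : 0 < c') (hct : 0 < ctilde)
    (hcν : 0 < cν) :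
    ∃ cbar : ℝ, 0 < cbar ∧ cbar < 1 ∧ ∃ K₀ : ℕ, ∀ K : ℕ, K₀ ≤ K →
      ∀ (x₀ : Fin d → ℤ) (κ : Kernel (Fin d → ℤ) (Fin d → ℤ)),
        IsMarkovKernel κ →
      ∀ ν : (Fin d → ℤ) → ℝ, (∀ y, cν ≤ ν y) →
      (∀ x y : Fin d → ℤ, ctilde * eudist d x y ≤ (K : ℝ) ^ 2 →
        ENNReal.ofReal (c / ((K : ℝ) ^ 2) ^ ((d : ℝ) / 2) *
          Real.exp (-c' * eudist d x y ^ 2 / (K : ℝ) ^ 2) * ν y)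
          ≤ κ x {y}) →
      (∀ x : Fin d → ℤ, eudist d x₀ x ≤ K →
        ENNReal.ofReal cbar
          ≤ κ x {y | 20 * (K : ℝ) ≤ eudist d x₀ y ∧ eudist d x₀ y ≤ 40 * K}) ∧
      (∀ n : ℕ, ∀ x : Fin d → ℤ, eudist d x₀ x ≤ K →
        stayProb κ {z | eudist d x₀ z ≤ K} n x
          ≤ ENNReal.ofReal ((1 - cbar) ^ n)) ∧
      (∀ α' : ℝ, 1 < α' → ∀ x : Fin d → ℤ, eudist d x₀ x ≤ K →
        stayProb κ {z | eudist d x₀ z ≤ K}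
            ⌊(K : ℝ) ^ (2 * α') / (K : ℝ) ^ 2⌋₊ x
          ≤ ENNReal.ofReal (Real.exp
              (-cbar * (⌊(K : ℝ) ^ (2 * α') / (K : ℝ) ^ 2⌋₊ : ℝ)))) := by
  have hdpos : 0 < d := by omega
  have hdR : (0 : ℝ) < d := by exact_mod_cast hdpos
  set E : ℝ := Real.exp (-(1681 * c')) with hE
  have hE0 : 0 < E := Real.exp_pos _
  set cb0 : ℝ := c * E * cν / (d : ℝ) ^ (d - 1) with hcb0
  have hcb0pos : 0 < cb0 := by rw [hcb0]; positivity
  set cbar : ℝ := min cb0 (1 / 2) with hcbar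
  have hcbarpos : 0 < cbar := lt_min hcb0pos (by norm_num)
  have hcbar_half : cbar ≤ 1 / 2 := min_le_right _ _
  have hcbar1 : cbar < 1 := lt_of_le_of_lt hcbar_half (by norm_num)
  refine ⟨cbar, hcbarpos, hcbar1, max 1 ⌈41 * ctilde⌉₊, ?_⟩
  intro K hK x₀ κ hκ ν hν hheat
  have hK1 : 1 ≤ K := le_trans (le_max_left _ _) hK
  have hKR : (0 : ℝ) < K := by exact_mod_cast hK1
  have hKct : 41 * ctilde ≤ (K : ℝ) := by
    have h1 : ⌈41 * ctilde⌉₊ ≤ K := le_trans (le_max_right _ _) hK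
    calc 41 * ctilde ≤ (⌈41 * ctilde⌉₊ : ℝ) := Nat.le_ceil _
      _ ≤ K := by exact_mod_cast h1
  have key : ∀ x : Fin d → ℤ, eudist d x₀ x ≤ K →
      ENNReal.ofReal cbar
        ≤ κ x {y | 20 * (K : ℝ) ≤ eudist d x₀ y ∧ eudist d x₀ y ≤ 40 * K} := by
    intro x hx
    refine le_trans (ENNReal.ofReal_le_ofReal ?_)
      (annulus_lower d hd c c' ctilde cν hc hc' hct hcν K hK1 hKct x₀ κ ν hν hheat x hx)
    rw [hcbar, hcb0, hE]
    exact min_le_left _ _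
  have hA : MeasurableSet {z : Fin d → ℤ | eudist d x₀ z ≤ (K : ℝ)} :=
    (Set.to_countable _).measurableSet
  have hdisj : Disjoint {z : Fin d → ℤ | eudist d x₀ z ≤ (K : ℝ)}
      {y : Fin d → ℤ | 20 * (K : ℝ) ≤ eudist d x₀ y ∧ eudist d x₀ y ≤ 40 * K} := by
    rw [Set.disjoint_left]
    intro z hz1 hz2
    have h1 : eudist d x₀ z ≤ K := hz1
    have h2 : 20 * (K : ℝ) ≤ eudist d x₀ z := hz2.1
    linarith
  have hAbound : ∀ x : Fin d → ℤ, eudist d x₀ x ≤ K →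
      κ x {z : Fin d → ℤ | eudist d x₀ z ≤ (K : ℝ)} ≤ ENNReal.ofReal (1 - cbar) := by
    intro x hx
    have h1 : κ x {z : Fin d → ℤ | eudist d x₀ z ≤ (K : ℝ)}
        + κ x {y | 20 * (K : ℝ) ≤ eudist d x₀ y ∧ eudist d x₀ y ≤ 40 * K} ≤ 1 := by
      rw [← measure_union hdisj ((Set.to_countable _).measurableSet)]
      calc κ x _ ≤ κ x Set.univ := measure_mono (Set.subset_univ _)
        _ = 1 := measure_univ
    have h2 : κ x {z : Fin d → ℤ | eudist d x₀ z ≤ (K : ℝ)} + ENNReal.ofReal cbar ≤ 1 :=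
      le_trans (add_le_add_right (key x hx) _) h1
    have h3 := ENNReal.le_sub_of_add_le_right ENNReal.ofReal_ne_top h2
    rwa [ENNReal.ofReal_sub _ hcbarpos.le, ENNReal.ofReal_one]
  have part2 : ∀ n : ℕ, ∀ x : Fin d → ℤ, eudist d x₀ x ≤ K →
      stayProb κ {z | eudist d x₀ z ≤ (K : ℝ)} n x ≤ ENNReal.ofReal ((1 - cbar) ^ n) := by
    intro n
    induction n with
    | zero => intro x hx; simp [stayProb]
    | succ n ih =>
      intro x hx
      have hpow : (0 : ℝ) ≤ (1 - cbar) ^ n := pow_nonneg (by linarith) n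
      calc stayProb κ {z | eudist d x₀ z ≤ (K : ℝ)} (n + 1) x
          = ∫⁻ y in {z | eudist d x₀ z ≤ (K : ℝ)},
              stayProb κ {z | eudist d x₀ z ≤ (K : ℝ)} n y ∂(κ x) := rfl
        _ ≤ ∫⁻ _y in {z | eudist d x₀ z ≤ (K : ℝ)},
              ENNReal.ofReal ((1 - cbar) ^ n) ∂(κ x) :=
            setLIntegral_mono' hA fun y hy => ih y hy
        _ = ENNReal.ofReal ((1 - cbar) ^ n)
              * κ x {z | eudist d x₀ z ≤ (K : ℝ)} := setLIntegral_const _ _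
        _ ≤ ENNReal.ofReal ((1 - cbar) ^ n) * ENNReal.ofReal (1 - cbar) :=
            mul_le_mul_right (hAbound x hx) _
        _ = ENNReal.ofReal ((1 - cbar) ^ (n + 1)) := by
            rw [← ENNReal.ofReal_mul hpow, ← pow_succ]
  refine ⟨key, part2, ?_⟩
  intro α' hα x hx
  refine (part2 _ x hx).trans (ENNReal.ofReal_le_ofReal ?_)
  set n := ⌊(K : ℝ) ^ (2 * α') / (K : ℝ) ^ 2⌋₊ with hn
  have h1 : 1 - cbar ≤ Real.exp (-cbar) := by
    have := Real.add_one_le_exp (-cbar)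
    linarith
  calc (1 - cbar) ^ n ≤ (Real.exp (-cbar)) ^ n :=
        pow_le_pow_left₀ (by linarith) h1 n
    _ = Real.exp (-cbar * n) := by
        rw [← Real.exp_nat_mul]
        ring_nf
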